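/- If π is a B-⌣_C-just path from the initial state of the instant-read model M_IR (C ∈ {T,S,I,A}), then the full-read path π' obtained by the i2f transformation (replacing each read(t,r,d) with start_read(t,r)·finish_read(t,r,d), or start_read(t,r)·order_read(t,r)·finish_read(t,r,d) for atomic r) is a B-⌣_C-just path from the initial state of M_FR; consequently ℓ⁻(π') = ℓ⁻(π) and WCT_C(M_IR) ⊆ WCT_C(M_FR). -/

import Mathlib

section Basic

variable {S A : Type*}

/-- A finite-or-infinite path: states, actions, and a length in `ℕ∞`. -/
structure RawPath (S A : Type*) where
  states : ℕ → S
  acts : ℕ → A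
  len : ℕ∞

/-- An action `a` is enabled in state `s`. -/
def EnabledIn (Tr : S → A → S → Prop) (a : A) (s : S) : Prop := ∃ s', Tr s a s'

/-- `π` is a path of the LTS `Tr` starting in `s0`. -/
def IsPathOf (Tr : S → A → S → Prop) (s0 : S) (π : RawPath S A) : Prop :=
  π.states 0 = s0 ∧ ∀ i : ℕ, (i : ℕ∞) < π.len → Tr (π.states i) (π.acts i) (π.states (i + 1))

/-- `B`-`conc`-justness: for each suffix of `π`, if a non-blockable action `a` is enabled
in its initial state, then an action interfering with `a` occurs in the suffix. -/
def JustPath (Tr : S → A → S → Prop) (conc : A → A → Prop) (B : Set A)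
    (π : RawPath S A) : Prop :=
  ∀ (k : ℕ) (a : A), (k : ℕ∞) ≤ π.len → a ∉ B → EnabledIn Tr a (π.states k) →
    ∃ j : ℕ, k ≤ j ∧ (j : ℕ∞) < π.len ∧ ¬ conc a (π.acts j)

/-- The number of occurrences of action `a` on the path `π`, in `ℕ∞`. -/
noncomputable def occCount (π : RawPath S A) (a : A) : ℕ∞ :=
  Set.encard {j : ℕ | (j : ℕ∞) < π.len ∧ π.acts j = a}

/-- `w` is the weak trace `ℓ⁻(π)`: the subsequence of `vis`-actions of `π`, in order. -/
def IsEllMinus (vis : A → Prop) (π : RawPath S A) (w : ℕ → Option A) : Prop :=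
  ∃ (m : ℕ∞) (f : ℕ → ℕ),
    (∀ i j : ℕ, (i : ℕ∞) < m → (j : ℕ∞) < m → i < j → f i < f j) ∧
    (∀ i : ℕ, (i : ℕ∞) < m →
      ((f i : ℕ∞) < π.len ∧ vis (π.acts (f i)) ∧ w i = some (π.acts (f i)))) ∧
    (∀ i : ℕ, ¬ (i : ℕ∞) < m → w i = none) ∧
    (∀ j : ℕ, (j : ℕ∞) < π.len → vis (π.acts j) → ∃ i : ℕ, (i : ℕ∞) < m ∧ f i = j)

/-- The set of weak `C`-complete traces of an LTS. -/
def WCT (Tr : S → A → S → Prop) (s0 : S) (Cjust : RawPath S A → Prop) (vis : A → Prop) :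
    Set (ℕ → Option A) :=
  {w | ∃ π : RawPath S A, IsPathOf Tr s0 π ∧ Cjust π ∧ IsEllMinus vis π w}

end Basic

/-- The actions of thread-register models: register interface actions, register-local
order actions, instant reads, and the thread-local actions (crit, noncrit, other). -/
inductive RWAct (T R : Type) (D : R → Type) : Type
  | startRead  (t : T) (r : R)
  | orderRead  (t : T) (r : R)
  | finishRead (t : T) (r : R) (d : D r)
  | startWrite (t : T) (r : R) (d : D r)
  | orderWrite (t : T) (r : R)
  | finishWrite (t : T) (r : R)
  | read (t : T) (r : R) (d : D r)
  | crit (t : T)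
  | noncrit (t : T)
  | tloc (t : T) (n : ℕ)

namespace RWAct

variable {T R : Type} {D : R → Type}

/-- The thread id of an action. -/
def thr : RWAct T R D → T
  | startRead t _ => t
  | orderRead t _ => t
  | finishRead t _ _ => t
  | startWrite t _ _ => t
  | orderWrite t _ => t
  | finishWrite t _ => t
  | read t _ _ => t
  | crit t => t
  | noncrit t => t
  | tloc t _ => t

/-- The register id of an action (`none` for thread-local actions). -/
def regOf : RWAct T R D → Option R
  | startRead _ r => some r
  | orderRead _ r => some r
  | finishRead _ r _ => some r
  | startWrite _ r _ => some r
  | orderWrite _ r => some r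
  | finishWrite _ r => some r
  | read _ r _ => some r
  | crit _ => none
  | noncrit _ => none
  | tloc _ _ => none

/-- Actions belonging to the alphabet of a thread (all but the register-local order actions). -/
def isThreadAct : RWAct T R D → Prop
  | orderRead _ _ => False
  | orderWrite _ _ => False
  | _ => True

/-- `read?`: `a` is the start of a read operation on register `r`. -/
def isReadStart (r : R) : RWAct T R D → Prop
  | startRead _ r' => r' = r
  | read _ r' _ => r' = r
  | _ => False

/-- `write?`: `a` is the start of a write operation on register `r`. -/
def isWriteStart (r : R) : RWAct T R D → Prop
  | startWrite _ r' _ => r' = r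
  | _ => False

/-- `a ∈ start(r)`. -/
def inStart (r : R) (a : RWAct T R D) : Prop := isReadStart r a ∨ isWriteStart r a

/-- The visible actions: `crit` and `noncrit`. -/
def IsVis : RWAct T R D → Prop
  | crit _ => True
  | noncrit _ => True
  | _ => False

/-- `a` is an (instant) read action. -/
def isReadAct : RWAct T R D → Prop
  | read _ _ _ => True
  | _ => False

end RWAct

/-- The local state of a register. -/
structure RegState (T D : Type) where
  stor : D
  rds : Set T
  wrts : Set T
  pend : Set T
  recv : T → D

/-- The four memory models: `FR` (arbitrary overlap), `A` (blocking reads and writes),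
`I` (blocking model with concurrent reads), `S` (blocking writes, non-blocking reads). -/
inductive OverlapMode : Type
  | FR | A | I | S

/-- The guard for start-read actions in each memory model. -/
def gRead {T D : Type} : OverlapMode → RegState T D → T → Prop
  | OverlapMode.FR, s, t => t ∉ s.rds ∧ t ∉ s.wrts
  | OverlapMode.A, s, _ => s.rds = ∅ ∧ s.wrts = ∅
  | OverlapMode.I, s, t => t ∉ s.rds ∧ s.wrts = ∅
  | OverlapMode.S, s, t => t ∉ s.rds ∧ s.wrts = ∅

/-- The guard for start-write actions in each memory model. -/
def gWrite {T D : Type} : OverlapMode → RegState T D → T → Prop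
  | OverlapMode.FR, s, t => t ∉ s.rds ∧ t ∉ s.wrts
  | OverlapMode.A, s, _ => s.rds = ∅ ∧ s.wrts = ∅
  | OverlapMode.I, s, _ => s.rds = ∅ ∧ s.wrts = ∅
  | OverlapMode.S, s, _ => s.wrts = ∅

/-- A family of thread LTSs, one per thread id. -/
structure ThreadSys (T R : Type) (D : R → Type) where
  TS : T → Type
  init : ∀ t, TS t
  tr : ∀ t, TS t → RWAct T R D → TS t → Prop

/-- A state of the thread-register model: a state per thread and per register. -/
structure MState {T R : Type} {D : R → Type} (Θ : ThreadSys T R D) where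
  th : ∀ t, Θ.TS t
  rg : ∀ r, RegState T (D r)

section Comp

variable {T R : Type} {D : R → Type} [DecidableEq T]

/-- The thread interference relation `⌣_T`. -/
def concT (a b : RWAct T R D) : Prop := a.thr ≠ b.thr

/-- The signalling reads relation `⌣_S`. -/
def concS (a b : RWAct T R D) : Prop :=
  concT a b ∧ ¬ ∃ r, RWAct.inStart r a ∧ RWAct.isWriteStart r b

/-- The interfering reads relation `⌣_I`. -/
def concI (a b : RWAct T R D) : Prop :=
  concS a b ∧ ¬ ∃ r, RWAct.isWriteStart r a ∧ RWAct.isReadStart r b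

/-- The all interfering relation `⌣_A`. -/
def concA (a b : RWAct T R D) : Prop :=
  concI a b ∧ ¬ ∃ r, RWAct.isReadStart r a ∧ RWAct.isReadStart r b

/-- The concurrency relation matching each memory model. -/
def concOf : OverlapMode → RWAct T R D → RWAct T R D → Prop
  | OverlapMode.FR => concT
  | OverlapMode.A => concA
  | OverlapMode.I => concI
  | OverlapMode.S => concS

/-- The blockable actions: a thread may stay in its non-critical section forever. -/
def Blk : Set (RWAct T R D) := {a | ∃ t : T, a = RWAct.noncrit t}

/-- The full-read atomic register LTS for register `r` (with start guards given by the
memory model `mode`; `FR` is the unrestricted model). -/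
inductive AtoTrans (mode : OverlapMode) (r : R) :
    RegState T (D r) → RWAct T R D → RegState T (D r) → Prop
  | startRead (s : RegState T (D r)) (t : T) (h : gRead mode s t) :
      AtoTrans mode r s (RWAct.startRead t r)
        { s with rds := insert t s.rds, pend := insert t s.pend }
  | orderRead (s : RegState T (D r)) (t : T) (h1 : t ∈ s.rds) (h2 : t ∈ s.pend) :
      AtoTrans mode r s (RWAct.orderRead t r)
        { s with pend := s.pend \ {t}, recv := Function.update s.recv t s.stor }
  | finishRead (s : RegState T (D r)) (t : T) (h1 : t ∈ s.rds) (h2 : t ∉ s.pend) :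
      AtoTrans mode r s (RWAct.finishRead t r (s.recv t)) { s with rds := s.rds \ {t} }
  | startWrite (s : RegState T (D r)) (t : T) (d : D r) (h : gWrite mode s t) :
      AtoTrans mode r s (RWAct.startWrite t r d)
        { s with wrts := insert t s.wrts, pend := insert t s.pend,
                 recv := Function.update s.recv t d }
  | orderWrite (s : RegState T (D r)) (t : T) (h1 : t ∈ s.wrts) (h2 : t ∈ s.pend) :
      AtoTrans mode r s (RWAct.orderWrite t r)
        { s with pend := s.pend \ {t}, stor := s.recv t }
  | finishWrite (s : RegState T (D r)) (t : T) (h1 : t ∈ s.wrts) (h2 : t ∉ s.pend) :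
      AtoTrans mode r s (RWAct.finishWrite t r) { s with wrts := s.wrts \ {t} }

/-- The instant-read atomic register LTS for register `r`. -/
inductive IRAtoTrans (r : R) :
    RegState T (D r) → RWAct T R D → RegState T (D r) → Prop
  | read (s : RegState T (D r)) (t : T) (h : t ∉ s.wrts) :
      IRAtoTrans r s (RWAct.read t r s.stor) s
  | startWrite (s : RegState T (D r)) (t : T) (d : D r) (h : t ∉ s.wrts) :
      IRAtoTrans r s (RWAct.startWrite t r d)
        { s with wrts := insert t s.wrts, pend := insert t s.pend,
                 recv := Function.update s.recv t d }
  | orderWrite (s : RegState T (D r)) (t : T) (h1 : t ∈ s.wrts) (h2 : t ∈ s.pend) :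
      IRAtoTrans r s (RWAct.orderWrite t r)
        { s with pend := s.pend \ {t}, stor := s.recv t }
  | finishWrite (s : RegState T (D r)) (t : T) (h1 : t ∈ s.wrts) (h2 : t ∉ s.pend) :
      IRAtoTrans r s (RWAct.finishWrite t r) { s with wrts := s.wrts \ {t} }

/-- The requirements on (full-read) thread LTSs: threads only perform their own
thread-type actions; after invoking a read they only await its response and accept all
domain values; after invoking a write they only await its response; and operation
responses occur only immediately after the matching invocation. -/
def ThreadSys.Good (Θ : ThreadSys T R D) : Prop :=
  (∀ t (s : Θ.TS t) a s', Θ.tr t s a s' → RWAct.thr a = t ∧ RWAct.isThreadAct a) ∧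
  (∀ t (s s' : Θ.TS t) t' r (d : D r), ¬ Θ.tr t s (RWAct.read t' r d) s') ∧
  (∀ t r (s m : Θ.TS t), Θ.tr t s (RWAct.startRead t r) m →
      (∀ d : D r, ∃ s', Θ.tr t m (RWAct.finishRead t r d) s') ∧
      (∀ a s', Θ.tr t m a s' → ∃ d : D r, a = RWAct.finishRead t r d)) ∧
  (∀ t r (d : D r) (s m : Θ.TS t), Θ.tr t s (RWAct.startWrite t r d) m →
      (∃ s', Θ.tr t m (RWAct.finishWrite t r) s') ∧
      (∀ a s', Θ.tr t m a s' → a = RWAct.finishWrite t r)) ∧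
  (∀ t r (d : D r) (s s' : Θ.TS t), Θ.tr t s (RWAct.finishRead t r d) s' →
      ∀ (s0 : Θ.TS t) a, Θ.tr t s0 a s → a = RWAct.startRead t r) ∧
  (∀ t r (s s' : Θ.TS t), Θ.tr t s (RWAct.finishWrite t r) s' →
      ∀ (s0 : Θ.TS t) a, Θ.tr t s0 a s → ∃ d : D r, a = RWAct.startWrite t r d)

/-- The instant-read transform of a full-read thread system: each instant read action
abbreviates a start-read immediately followed by the matching finish-read. -/
def ThreadSys.toIR (Θ : ThreadSys T R D) : ThreadSys T R D :=
  { TS := Θ.TS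
    init := Θ.init
    tr := fun t s a s' =>
      ((∀ t' r, a ≠ RWAct.startRead t' r) ∧
       (∀ t' r (d : D r), a ≠ RWAct.finishRead t' r d) ∧
       Θ.tr t s a s') ∨
      (∃ (r : R) (d : D r) (m : Θ.TS t), a = RWAct.read t r d ∧
         Θ.tr t s (RWAct.startRead t r) m ∧ Θ.tr t m (RWAct.finishRead t r d) s') }

/-- The CSP-style parallel composition of the thread LTSs with the (full-read) atomic
register LTSs, for the memory model `mode`. -/
def MTrans (mode : OverlapMode) (Θ : ThreadSys T R D) :
    MState Θ → RWAct T R D → MState Θ → Prop := fun s a s' =>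
  (∀ t, (RWAct.thr a = t ∧ RWAct.isThreadAct a → Θ.tr t (s.th t) a (s'.th t)) ∧
        (¬ (RWAct.thr a = t ∧ RWAct.isThreadAct a) → s'.th t = s.th t)) ∧
  (∀ r, (RWAct.regOf a = some r → AtoTrans mode r (s.rg r) a (s'.rg r)) ∧
        (RWAct.regOf a ≠ some r → s'.rg r = s.rg r))

/-- The CSP-style parallel composition with the instant-read atomic register LTSs. -/
def MTransIR (Θ : ThreadSys T R D) :
    MState Θ → RWAct T R D → MState Θ → Prop := fun s a s' =>
  (∀ t, (RWAct.thr a = t ∧ RWAct.isThreadAct a → Θ.tr t (s.th t) a (s'.th t)) ∧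
        (¬ (RWAct.thr a = t ∧ RWAct.isThreadAct a) → s'.th t = s.th t)) ∧
  (∀ r, (RWAct.regOf a = some r → IRAtoTrans r (s.rg r) a (s'.rg r)) ∧
        (RWAct.regOf a ≠ some r → s'.rg r = s.rg r))

/-- The initial state of the thread-register model, with register initial values `d0`. -/
def Minit (Θ : ThreadSys T R D) (d0 : ∀ r, D r) : MState Θ :=
  { th := Θ.init
    rg := fun r => { stor := d0 r, rds := ∅, wrts := ∅, pend := ∅, recv := fun _ => d0 r } }

/-- `a` is thread-enabled by `π`: only finitely many actions of `a`'s thread occur on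
`π`, and `a` is enabled in the component state of that thread after its last action. -/
def ThreadEnabled (Θ : ThreadSys T R D) (π : RawPath (MState Θ) (RWAct T R D))
    (a : RWAct T R D) : Prop :=
  ∃ k : ℕ, (k : ℕ∞) ≤ π.len ∧
    (∀ j : ℕ, k ≤ j → (j : ℕ∞) < π.len → RWAct.thr (π.acts j) ≠ RWAct.thr a) ∧
    ∃ s', Θ.tr (RWAct.thr a) ((π.states k).th (RWAct.thr a)) a s'

/-- `π'` arises from `π` by the `i2f` transformation on action sequences: each instant
read is replaced by the sequence start-read · order-read · finish-read, other actions
are kept. -/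
def IsI2F {S₁ S₂ : Type*} (π : RawPath S₁ (RWAct T R D)) (π' : RawPath S₂ (RWAct T R D)) :
    Prop :=
  ∃ f : ℕ → ℕ, f 0 = 0 ∧
    (∀ k : ℕ, (k : ℕ∞) < π.len →
      ((¬ RWAct.isReadAct (π.acts k) ∧ π'.acts (f k) = π.acts k ∧ f (k + 1) = f k + 1) ∨
       (∃ (t : T) (r : R) (d : D r), π.acts k = RWAct.read t r d ∧
          π'.acts (f k) = RWAct.startRead t r ∧
          π'.acts (f k + 1) = RWAct.orderRead t r ∧
          π'.acts (f k + 2) = RWAct.finishRead t r d ∧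
          f (k + 1) = f k + 3))) ∧
    (π.len = ⊤ → π'.len = ⊤) ∧
    (∀ n : ℕ, π.len = (n : ℕ∞) → π'.len = ((f n : ℕ) : ℕ∞))

end Comp
set_option linter.unusedSectionVars false

namespace I2FAux

open RWAct

attribute [local instance 10] Classical.propDecidable

variable {T R : Type} {D : R → Type} [DecidableEq T] [DecidableEq R]

/-! ### profile equality and congruence of the concurrency relations -/

def prEq (a a' : RWAct T R D) : Prop :=
  a.thr = a'.thr ∧ (∀ r, a.isReadStart r ↔ a'.isReadStart r) ∧
    (∀ r, a.isWriteStart r ↔ a'.isWriteStart r)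

lemma prEq_refl (a : RWAct T R D) : prEq a a := ⟨rfl, fun _ => Iff.rfl, fun _ => Iff.rfl⟩

lemma prEq_symm {a a' : RWAct T R D} (h : prEq a a') : prEq a' a :=
  ⟨h.1.symm, fun r => (h.2.1 r).symm, fun r => (h.2.2 r).symm⟩

lemma prEq_read_startRead (t : T) (r : R) (d : D r) :
    prEq (RWAct.read t r d) (RWAct.startRead t r) :=
  ⟨rfl, fun _ => Iff.rfl, fun _ => Iff.rfl⟩

section Conc

variable {conc : RWAct T R D → RWAct T R D → Prop}
  (hconc : conc = concT ∨ conc = concS ∨ conc = concI ∨ conc = concA)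

lemma conc_thr (hconc : conc = concT ∨ conc = concS ∨ conc = concI ∨ conc = concA)
    {a b : RWAct T R D} (h : conc a b) : a.thr ≠ b.thr := by
  rcases hconc with rfl | rfl | rfl | rfl
  · exact h
  · exact h.1
  · exact h.1.1
  · exact h.1.1.1

lemma concT_congr {a a' b b' : RWAct T R D} (ha : prEq a a') (hb : prEq b b') :
    concT a b ↔ concT a' b' := by unfold concT; rw [ha.1, hb.1]

lemma inStart_congr {a a' : RWAct T R D} (ha : prEq a a') (r : R) :
    inStart r a ↔ inStart r a' := or_congr (ha.2.1 r) (ha.2.2 r)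

lemma concS_congr {a a' b b' : RWAct T R D} (ha : prEq a a') (hb : prEq b b') :
    concS a b ↔ concS a' b' :=
  and_congr (concT_congr ha hb)
    (not_congr (exists_congr fun r => and_congr (inStart_congr ha r) (hb.2.2 r)))

lemma concI_congr {a a' b b' : RWAct T R D} (ha : prEq a a') (hb : prEq b b') :
    concI a b ↔ concI a' b' :=
  and_congr (concS_congr ha hb)
    (not_congr (exists_congr fun r => and_congr (ha.2.2 r) (hb.2.1 r)))

lemma concA_congr {a a' b b' : RWAct T R D} (ha : prEq a a') (hb : prEq b b') :
    concA a b ↔ concA a' b' :=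
  and_congr (concI_congr ha hb)
    (not_congr (exists_congr fun r => and_congr (ha.2.1 r) (hb.2.1 r)))

lemma conc_congr (hconc : conc = concT ∨ conc = concS ∨ conc = concI ∨ conc = concA)
    {a a' b b' : RWAct T R D} (ha : prEq a a') (hb : prEq b b') :
    conc a b ↔ conc a' b' := by
  rcases hconc with rfl | rfl | rfl | rfl
  · exact concT_congr ha hb
  · exact concS_congr ha hb
  · exact concI_congr ha hb
  · exact concA_congr ha hb

end Conc

/-! ### the construction of the full-read path -/

variable (Θ : ThreadSys T R D) (d0 : ∀ r, D r)

/-- The net effect of one instant-read action on the full-read registers. -/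
def regStep (a : RWAct T R D) (ρ : ∀ r, RegState T (D r)) : ∀ r, RegState T (D r) :=
  match a with
  | .read t r _ =>
      Function.update ρ r { ρ r with recv := Function.update (ρ r).recv t (ρ r).stor }
  | .startWrite t r d =>
      Function.update ρ r
        { ρ r with
          wrts := insert t (ρ r).wrts
          pend := insert t (ρ r).pend
          recv := Function.update (ρ r).recv t d }
  | .orderWrite t r =>
      Function.update ρ r { ρ r with pend := (ρ r).pend \ {t}, stor := (ρ r).recv t }
  | .finishWrite t r =>
      Function.update ρ r { ρ r with wrts := (ρ r).wrts \ {t} }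
  | _ => ρ

variable (π : RawPath (MState Θ.toIR) (RWAct T R D))

def regs : ℕ → ∀ r, RegState T (D r)
  | 0 => fun r => { stor := d0 r, rds := ∅, wrts := ∅, pend := ∅, recv := fun _ => d0 r }
  | k+1 => regStep (π.acts k) (regs k)

def stFR (k : ℕ) : MState Θ := { th := (π.states k).th, rg := regs Θ d0 π k }

def Qread (k : ℕ) : Prop :=
  ∃ (σ1 σ2 : MState Θ) (t : T) (r : R) (d : D r),
    π.acts k = RWAct.read t r d ∧
    MTrans OverlapMode.FR Θ (stFR Θ d0 π k) (RWAct.startRead t r) σ1 ∧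
    MTrans OverlapMode.FR Θ σ1 (RWAct.orderRead t r) σ2 ∧
    MTrans OverlapMode.FR Θ σ2 (RWAct.finishRead t r d) (stFR Θ d0 π (k+1))

noncomputable def mid1 (k : ℕ) : MState Θ :=
  if h : Qread Θ d0 π k then h.choose else stFR Θ d0 π k

noncomputable def mid2 (k : ℕ) : MState Θ :=
  if h : Qread Θ d0 π k then h.choose_spec.choose else stFR Θ d0 π k

noncomputable def blockLen (k : ℕ) : ℕ :=
  if (k : ℕ∞) < π.len ∧ RWAct.isReadAct (π.acts k) then 3 else 1

noncomputable def fIdx : ℕ → ℕ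
  | 0 => 0
  | k+1 => fIdx k + blockLen Θ π k

noncomputable def gIdx : ℕ → ℕ × ℕ
  | 0 => (0, 0)
  | n+1 =>
      if (gIdx n).2 + 1 < blockLen Θ π (gIdx n).1 then ((gIdx n).1, (gIdx n).2 + 1)
      else ((gIdx n).1 + 1, 0)

def blockAct (k i : ℕ) : RWAct T R D :=
  match π.acts k, i with
  | .read t r _, 0 => .startRead t r
  | .read t r _, 1 => .orderRead t r
  | .read t r d, _ => .finishRead t r d
  | a, _ => a

noncomputable def blockState (k i : ℕ) : MState Θ :=
  if i = 0 then stFR Θ d0 π k else if i = 1 then mid1 Θ d0 π k else mid2 Θ d0 π k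

noncomputable def plen : ℕ∞ := if π.len = ⊤ then ⊤ else (fIdx Θ π π.len.toNat : ℕ∞)

noncomputable def pathFR : RawPath (MState Θ) (RWAct T R D) :=
  { states := fun n => blockState Θ d0 π (gIdx Θ π n).1 (gIdx Θ π n).2
    acts := fun n => blockAct Θ π (gIdx Θ π n).1 (gIdx Θ π n).2
    len := plen Θ π }

end I2FAux
namespace I2FAux

open RWAct

attribute [local instance 10] Classical.propDecidable

variable {T R : Type} {D : R → Type} [DecidableEq T] [DecidableEq R]
variable (Θ : ThreadSys T R D) (d0 : ∀ r, D r) (π : RawPath (MState Θ.toIR) (RWAct T R D))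

lemma blockLen_pos (k : ℕ) : 1 ≤ blockLen Θ π k := by
  unfold blockLen; split <;> omega

lemma blockLen_le (k : ℕ) : blockLen Θ π k ≤ 3 := by
  unfold blockLen; split <;> omega

lemma isReadAct_iff {a : RWAct T R D} (h : a.isReadAct) :
    ∃ t r d, a = RWAct.read t r d := by
  cases a <;> first | exact ⟨_, _, _, rfl⟩ | exact h.elim

lemma blockLen_eq3 {k : ℕ} (h : (k : ℕ∞) < π.len) {t r} {d : D r}
    (hr : π.acts k = RWAct.read t r d) : blockLen Θ π k = 3 := by
  unfold blockLen; rw [if_pos ⟨h, by rw [hr]; trivial⟩]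

lemma blockLen_eq3' {k : ℕ} (h : blockLen Θ π k = 3) :
    (k : ℕ∞) < π.len ∧ ∃ t r d, π.acts k = RWAct.read t r d := by
  unfold blockLen at h; split at h
  · rename_i hc; exact ⟨hc.1, isReadAct_iff hc.2⟩
  · omega

lemma blockLen_eq1 {k : ℕ} (h : ¬ ((k : ℕ∞) < π.len ∧ (π.acts k).isReadAct)) :
    blockLen Θ π k = 1 := by
  unfold blockLen; rw [if_neg h]

lemma fIdx_succ (k : ℕ) : fIdx Θ π (k+1) = fIdx Θ π k + blockLen Θ π k := rfl

lemma fIdx_mono : StrictMono (fIdx Θ π) :=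
  strictMono_nat_of_lt_succ fun k => by
    have := blockLen_pos Θ π k; rw [fIdx_succ]; omega

lemma gIdx_struct (n : ℕ) :
    n = fIdx Θ π (gIdx Θ π n).1 + (gIdx Θ π n).2 ∧
      (gIdx Θ π n).2 < blockLen Θ π (gIdx Θ π n).1 := by
  induction n with
  | zero => exact ⟨rfl, blockLen_pos Θ π 0⟩
  | succ n ih =>
    obtain ⟨h1, h2⟩ := ih
    by_cases hc : (gIdx Θ π n).2 + 1 < blockLen Θ π (gIdx Θ π n).1
    · simp only [gIdx, if_pos hc]; exact ⟨by omega, hc⟩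
    · simp only [gIdx, if_neg hc]
      refine ⟨?_, blockLen_pos Θ π _⟩
      have : blockLen Θ π (gIdx Θ π n).1 = (gIdx Θ π n).2 + 1 := by omega
      rw [fIdx_succ]; omega

lemma block_unique {k i k' i' : ℕ} (hi : i < blockLen Θ π k) (hi' : i' < blockLen Θ π k')
    (h : fIdx Θ π k + i = fIdx Θ π k' + i') : k = k' ∧ i = i' := by
  rcases lt_trichotomy k k' with hlt | rfl | hlt
  · exfalso
    have h1 : fIdx Θ π k + i < fIdx Θ π (k+1) := by rw [fIdx_succ]; omega
    have h2 : fIdx Θ π (k+1) ≤ fIdx Θ π k' := (fIdx_mono Θ π).monotone hlt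
    omega
  · omega
  · exfalso
    have h1 : fIdx Θ π k' + i' < fIdx Θ π (k'+1) := by rw [fIdx_succ]; omega
    have h2 : fIdx Θ π (k'+1) ≤ fIdx Θ π k := (fIdx_mono Θ π).monotone hlt
    omega

lemma gIdx_eq {n k i : ℕ} (hi : i < blockLen Θ π k) (hn : n = fIdx Θ π k + i) :
    gIdx Θ π n = (k, i) := by
  obtain ⟨h1, h2⟩ := gIdx_struct Θ π n
  obtain ⟨hk, hi2⟩ := block_unique Θ π h2 hi (by omega)
  exact Prod.ext hk hi2

lemma plen_top (h : π.len = ⊤) : plen Θ π = ⊤ := by unfold plen; rw [if_pos h]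

lemma plen_coe (h : π.len ≠ ⊤) : plen Θ π = (fIdx Θ π π.len.toNat : ℕ∞) := by
  unfold plen; rw [if_neg h]

lemma len_toNat (h : π.len ≠ ⊤) : ((π.len.toNat : ℕ) : ℕ∞) = π.len := ENat.coe_toNat h

lemma lt_plen {k i : ℕ} (hk : (k : ℕ∞) < π.len) (hi : i < blockLen Θ π k) :
    ((fIdx Θ π k + i : ℕ) : ℕ∞) < plen Θ π := by
  by_cases htop : π.len = ⊤
  · rw [plen_top Θ π htop]; exact ENat.coe_lt_top _
  · rw [plen_coe Θ π htop]
    rw [← len_toNat Θ π htop] at hk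
    have hk' : k < π.len.toNat := Nat.cast_lt.mp hk
    have h1 : fIdx Θ π k + i < fIdx Θ π (k+1) := by rw [fIdx_succ]; omega
    have h2 : fIdx Θ π (k+1) ≤ fIdx Θ π π.len.toNat := (fIdx_mono Θ π).monotone hk'
    exact_mod_cast (by omega : fIdx Θ π k + i < fIdx Θ π π.len.toNat)

lemma blk_lt_len {n : ℕ} (hn : (n : ℕ∞) < plen Θ π) : ((gIdx Θ π n).1 : ℕ∞) < π.len := by
  by_contra hc
  push_neg at hc
  have htop : π.len ≠ ⊤ := by
    intro h; rw [h] at hc; exact absurd (le_antisymm le_top hc) (by simp)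
  rw [← len_toNat Θ π htop] at hc
  have hle : π.len.toNat ≤ (gIdx Θ π n).1 := Nat.cast_le.mp hc
  rw [plen_coe Θ π htop] at hn
  have hn' : n < fIdx Θ π π.len.toNat := Nat.cast_lt.mp hn
  have h1 := (gIdx_struct Θ π n).1
  have h2 : fIdx Θ π π.len.toNat ≤ fIdx Θ π (gIdx Θ π n).1 := (fIdx_mono Θ π).monotone hle
  omega

lemma blk_le_len {n : ℕ} (hn : (n : ℕ∞) ≤ plen Θ π) : ((gIdx Θ π n).1 : ℕ∞) ≤ π.len := by
  rcases lt_or_eq_of_le hn with h | h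
  · exact le_of_lt (blk_lt_len Θ π h)
  · by_cases htop : π.len = ⊤
    · rw [htop]; exact le_top
    · rw [plen_coe Θ π htop] at h
      have hn' : n = fIdx Θ π π.len.toNat := Nat.cast_inj.mp h
      have := gIdx_eq Θ π (blockLen_pos Θ π π.len.toNat) (by omega : n = fIdx Θ π π.len.toNat + 0)
      rw [this]
      exact le_of_eq (len_toNat Θ π htop)

lemma gIdx_end {n : ℕ} (htop : π.len ≠ ⊤) (h : (n : ℕ∞) = plen Θ π) :
    gIdx Θ π n = (π.len.toNat, 0) := by
  rw [plen_coe Θ π htop] at h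
  exact gIdx_eq Θ π (blockLen_pos Θ π _) (by simpa using Nat.cast_inj.mp h)

end I2FAux
namespace I2FAux

open RWAct

attribute [local instance 10] Classical.propDecidable

variable {T R : Type} {D : R → Type} [DecidableEq T] [DecidableEq R]
variable (Θ : ThreadSys T R D) (d0 : ∀ r, D r) (π : RawPath (MState Θ.toIR) (RWAct T R D))

lemma regStep_rds (a : RWAct T R D) (ρ : ∀ r, RegState T (D r)) (r : R) :
    (regStep a ρ r).rds = (ρ r).rds := by
  cases a with
  | read t r0 d =>
      rcases eq_or_ne r r0 with rfl | h
      · simp only [regStep, Function.update_self]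
      · simp only [regStep]; rw [Function.update_of_ne h]
  | startWrite t r0 d =>
      rcases eq_or_ne r r0 with rfl | h
      · simp only [regStep, Function.update_self]
      · simp only [regStep]; rw [Function.update_of_ne h]
  | orderWrite t r0 =>
      rcases eq_or_ne r r0 with rfl | h
      · simp only [regStep, Function.update_self]
      · simp only [regStep]; rw [Function.update_of_ne h]
  | finishWrite t r0 =>
      rcases eq_or_ne r r0 with rfl | h
      · simp only [regStep, Function.update_self]
      · simp only [regStep]; rw [Function.update_of_ne h]
  | _ => rfl

lemma regStep_other {a : RWAct T R D} {ρ : ∀ r, RegState T (D r)} {r : R}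
    (h : a.regOf ≠ some r) : regStep a ρ r = ρ r := by
  cases a with
  | read t r0 d =>
      exact Function.update_of_ne (fun e => h (by rw [e]; rfl)) _ _
  | startWrite t r0 d =>
      exact Function.update_of_ne (fun e => h (by rw [e]; rfl)) _ _
  | orderWrite t r0 =>
      exact Function.update_of_ne (fun e => h (by rw [e]; rfl)) _ _
  | finishWrite t r0 =>
      exact Function.update_of_ne (fun e => h (by rw [e]; rfl)) _ _
  | _ => rfl

lemma regs_rds (k : ℕ) (r : R) : (regs Θ d0 π k r).rds = ∅ := by
  induction k with
  | zero => rfl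
  | succ k ih => rw [show regs Θ d0 π (k+1) = regStep (π.acts k) (regs Θ d0 π k) from rfl,
      regStep_rds]; exact ih

def RegRel {Dr : Type} (s F : RegState T Dr) : Prop :=
  F.stor = s.stor ∧ s.rds = ∅ ∧ F.wrts = s.wrts ∧ F.pend = s.pend ∧
    s.pend ⊆ s.wrts ∧ ∀ t ∈ s.wrts, F.recv t = s.recv t

lemma inv_all (hπ : IsPathOf (MTransIR Θ.toIR) (Minit Θ.toIR d0) π) :
    ∀ k : ℕ, (k:ℕ∞) ≤ π.len → ∀ r, RegRel ((π.states k).rg r) (regs Θ d0 π k r) := by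
  intro k
  induction k with
  | zero =>
      intro _ r; rw [hπ.1]
      exact ⟨rfl, rfl, rfl, rfl, subset_rfl, fun t _ => rfl⟩
  | succ k ih =>
      intro hk r
      have hklt : (k:ℕ∞) < π.len :=
        lt_of_lt_of_le (by exact_mod_cast Nat.lt_succ_self k) hk
      have step := hπ.2 k hklt
      have ihr := ih (le_of_lt hklt) r
      by_cases hr : (π.acts k).regOf = some r
      · have hir := (step.2 r).1 hr
        have hreg : regs Θ d0 π (k+1) r = regStep (π.acts k) (regs Θ d0 π k) r := rfl
        obtain ⟨e1, e2, e3, e4, e5, e6⟩ := ihr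
        generalize hA : π.acts k = a at hir
        generalize hS' : (π.states (k+1)).rg r = s' at hir
        cases hir with
        | read t h =>
            rw [hreg, hA]
            simp only [regStep, Function.update_self]
            refine ⟨e1, e2, e3, e4, e5, fun t' ht' => ?_⟩
            dsimp only
            rw [Function.update_of_ne (fun e : t' = t => h (by rw [← e]; exact ht'))]
            exact e6 t' ht'
        | startWrite t d h =>
            rw [hreg, hA]
            simp only [regStep, Function.update_self]
            refine ⟨e1, e2, ?_, ?_, ?_, ?_⟩
            · rw [e3]
            · rw [e4]
            · exact Set.insert_subset_insert e5
            · intro t' ht'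
              dsimp only
              rcases eq_or_ne t' t with rfl | hne
              · simp
              · rw [Function.update_of_ne hne, Function.update_of_ne hne]
                refine e6 t' ?_
                rcases Set.mem_insert_iff.mp ht' with h' | h'
                · exact absurd h' hne
                · exact h'
        | orderWrite t h1 h2 =>
            rw [hreg, hA]
            simp only [regStep, Function.update_self]
            refine ⟨e6 t h1, e2, e3, ?_, ?_, fun t' ht' => e6 t' ht'⟩
            · rw [e4]
            · exact Set.diff_subset.trans e5
        | finishWrite t h1 h2 =>
            rw [hreg, hA]
            simp only [regStep, Function.update_self]
            refine ⟨e1, e2, ?_, e4, ?_, fun t' ht' => e6 t' ht'.1⟩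
            · rw [e3]
            · intro x hx
              refine ⟨e5 hx, ?_⟩
              intro hxx
              rw [Set.mem_singleton_iff] at hxx
              subst hxx
              exact h2 hx
      · have h1 : (π.states (k+1)).rg r = (π.states k).rg r := (step.2 r).2 hr
        have h2 : regs Θ d0 π (k+1) r = regs Θ d0 π k r := regStep_other hr
        rw [h1, h2]; exact ihr

end I2FAux
namespace I2FAux

open RWAct

attribute [local instance 10] Classical.propDecidable

variable {T R : Type} {D : R → Type} [DecidableEq T] [DecidableEq R]
variable (Θ : ThreadSys T R D) (d0 : ∀ r, D r) (π : RawPath (MState Θ.toIR) (RWAct T R D))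

lemma sim_nonread (hπ : IsPathOf (MTransIR Θ.toIR) (Minit Θ.toIR d0) π) {k : ℕ}
    (hk : (k:ℕ∞) < π.len) (hnr : ¬ (π.acts k).isReadAct) :
    MTrans OverlapMode.FR Θ (stFR Θ d0 π k) (π.acts k) (stFR Θ d0 π (k+1)) := by
  have step := hπ.2 k hk
  constructor
  · intro t
    constructor
    · intro h
      have htr := (step.1 t).1 h
      rcases htr with ⟨-, -, htr⟩ | ⟨r', d', m, heq, -, -⟩
      · exact htr
      · rw [heq] at hnr; exact absurd trivial hnr
    · intro h; exact (step.1 t).2 h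
  · intro r
    constructor
    · intro hr
      show AtoTrans OverlapMode.FR r (regs Θ d0 π k r) (π.acts k) ((stFR Θ d0 π (k+1)).rg r)
      have hir := (step.2 r).1 hr
      obtain ⟨e1, e2, e3, e4, e5, e6⟩ := inv_all Θ d0 π hπ k (le_of_lt hk) r
      generalize hA : π.acts k = a at hir hnr
      generalize hS' : (π.states (k+1)).rg r = s' at hir
      cases hir with
      | read t h => exact absurd trivial hnr
      | startWrite t d h =>
          have hreg2 : (stFR Θ d0 π (k+1)).rg r
              = regStep (RWAct.startWrite t r d) (regs Θ d0 π k) r := by rw [← hA]; rfl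
          rw [hreg2]
          simp only [regStep, Function.update_self]
          exact AtoTrans.startWrite _ t d
            ⟨by rw [regs_rds]; exact Set.notMem_empty t, by rw [e3]; exact h⟩
      | orderWrite t h1 h2 =>
          have hreg2 : (stFR Θ d0 π (k+1)).rg r
              = regStep (RWAct.orderWrite t r) (regs Θ d0 π k) r := by rw [← hA]; rfl
          rw [hreg2]
          simp only [regStep, Function.update_self]
          exact AtoTrans.orderWrite _ t (by rw [e3]; exact h1) (by rw [e4]; exact h2)
      | finishWrite t h1 h2 =>
          have hreg2 : (stFR Θ d0 π (k+1)).rg r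
              = regStep (RWAct.finishWrite t r) (regs Θ d0 π k) r := by rw [← hA]; rfl
          rw [hreg2]
          simp only [regStep, Function.update_self]
          exact AtoTrans.finishWrite _ t (by rw [e3]; exact h1) (by rw [e4]; exact h2)
    · intro hr
      exact regStep_other hr

lemma qread_of (hπ : IsPathOf (MTransIR Θ.toIR) (Minit Θ.toIR d0) π) (hΘ : Θ.Good) {k : ℕ}
    (hk : (k:ℕ∞) < π.len) {t : T} {r : R} {d : D r}
    (hrd : π.acts k = RWAct.read t r d) : Qread Θ d0 π k := by
  have step := hπ.2 k hk
  obtain ⟨e1, e2, e3, e4, e5, e6⟩ := inv_all Θ d0 π hπ k (le_of_lt hk) r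
  have hir := (step.2 r).1 (by rw [hrd]; rfl)
  rw [hrd] at hir
  generalize hS' : (π.states (k+1)).rg r = s' at hir
  cases hir with
  | read hw =>
    rename_i hw
    -- now d has been substituted by ((π.states k).rg r).stor
    have htr := (step.1 t).1 ⟨by rw [hrd]; rfl, by rw [hrd]; trivial⟩
    rw [hrd] at htr
    rcases htr with ⟨-, -, htr⟩ | ⟨r', d', m, heq, hm1, hm2⟩
    · exact absurd htr (hΘ.2.1 t _ _ t r _)
    · rw [RWAct.read.injEq] at heq
      obtain ⟨-, rfl, hd⟩ := heq
      have hd' := eq_of_heq hd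
      subst hd'
      refine ⟨⟨Function.update (π.states k).th t m,
               Function.update (regs Θ d0 π k) r
                 { regs Θ d0 π k r with
                   rds := insert t (regs Θ d0 π k r).rds
                   pend := insert t (regs Θ d0 π k r).pend }⟩,
              ⟨Function.update (π.states k).th t m,
               Function.update (regs Θ d0 π k) r
                 { regs Θ d0 π k r with
                   rds := insert t (regs Θ d0 π k r).rds
                   pend := (insert t (regs Θ d0 π k r).pend) \ {t}
                   recv := Function.update (regs Θ d0 π k r).recv t
                     (regs Θ d0 π k r).stor }⟩,
              t, r, _, hrd, ⟨fun t'' => ⟨?_, ?_⟩, fun r'' => ⟨?_, ?_⟩⟩,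
              ⟨fun t'' => ⟨?_, ?_⟩, fun r'' => ⟨?_, ?_⟩⟩,
              ⟨fun t'' => ⟨?_, ?_⟩, fun r'' => ⟨?_, ?_⟩⟩⟩
      · rintro ⟨h1, -⟩
        have h1' : t = t'' := h1
        subst h1'
        dsimp only
        erw [Function.update_self]
        exact hm1
      · intro hn
        have hne : t ≠ t'' := fun e => hn ⟨e, trivial⟩
        dsimp only
        erw [Function.update_of_ne (Ne.symm hne)]
        rfl
      · intro hreq
        simp only [RWAct.regOf, Option.some.injEq] at hreq
        subst hreq
        dsimp only
        rw [Function.update_self]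
        show AtoTrans OverlapMode.FR r (regs Θ d0 π k r) _ _
        exact AtoTrans.startRead _ t
          ⟨by rw [regs_rds]; exact Set.notMem_empty t, by rw [e3]; exact hw⟩
      · intro hne
        have hne' : r'' ≠ r := fun e => hne (by subst e; rfl)
        dsimp only
        rw [Function.update_of_ne hne']
        rfl
      · rintro ⟨-, hta⟩
        exact hta.elim
      · intro _
        rfl
      · intro hreq
        simp only [RWAct.regOf, Option.some.injEq] at hreq
        subst hreq
        dsimp only
        simp only [Function.update_self]
        exact AtoTrans.orderRead _ t (Set.mem_insert t _) (Set.mem_insert t _)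
      · intro hne
        have hne' : r'' ≠ r := fun e => hne (by subst e; rfl)
        dsimp only
        rw [Function.update_of_ne hne', Function.update_of_ne hne']
      · rintro ⟨h1, -⟩
        have h1' : t = t'' := h1
        subst h1'
        dsimp only
        erw [Function.update_self]
        exact hm2
      · intro hn
        have hne : t ≠ t'' := fun e => hn ⟨e, trivial⟩
        dsimp only
        erw [Function.update_of_ne (Ne.symm hne)]
        exact (step.1 t'').2 (fun hc => hne (by rw [hrd] at hc; exact hc.1))
      · intro hreq
        simp only [RWAct.regOf, Option.some.injEq] at hreq
        subst hreq
        dsimp only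
        rw [Function.update_self]
        have htp : t ∉ (regs Θ d0 π k r).pend := by
          rw [e4]; exact fun hh => hw (e5 hh)
        have hgoal : (stFR Θ d0 π (k+1)).rg r =
            { regs Θ d0 π k r with
              recv := Function.update (regs Θ d0 π k r).recv t (regs Θ d0 π k r).stor } := by
          show regStep (π.acts k) (regs Θ d0 π k) r = _
          rw [hrd]
          simp only [regStep, Function.update_self]
        rw [hgoal]
        have hconstr := AtoTrans.finishRead (mode := OverlapMode.FR)
          { regs Θ d0 π k r with
            rds := insert t (regs Θ d0 π k r).rds
            pend := (insert t (regs Θ d0 π k r).pend) \ {t}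
            recv := Function.update (regs Θ d0 π k r).recv t (regs Θ d0 π k r).stor }
          t (Set.mem_insert t _) (fun hc => hc.2 rfl)
        have hrec : ({ regs Θ d0 π k r with
            rds := (insert t (regs Θ d0 π k r).rds) \ {t}
            pend := (insert t (regs Θ d0 π k r).pend) \ {t}
            recv := Function.update (regs Θ d0 π k r).recv t (regs Θ d0 π k r).stor } : RegState T (D r)) =
            { regs Θ d0 π k r with
              recv := Function.update (regs Θ d0 π k r).recv t (regs Θ d0 π k r).stor } := by
          have h1 : (insert t (regs Θ d0 π k r).rds) \ {t} = (regs Θ d0 π k r).rds := by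
            rw [regs_rds]; simp
          have h2 : (insert t (regs Θ d0 π k r).pend) \ {t} = (regs Θ d0 π k r).pend :=
            Set.insert_diff_self_of_notMem htp
          rw [h1, h2]
        have haction : (Function.update (regs Θ d0 π k r).recv t (regs Θ d0 π k r).stor) t
            = ((π.states k).rg r).stor := by rw [Function.update_self, e1]
        rw [← haction, ← hrec]
        exact hconstr
      · intro hne
        have hne' : r'' ≠ r := fun e => hne (by subst e; rfl)
        dsimp only
        rw [Function.update_of_ne hne']
        have hro : (π.acts k).regOf ≠ some r'' := by
          rw [hrd]
          simp only [RWAct.regOf, Ne, Option.some.injEq]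
          exact fun e => hne' e.symm
        exact regStep_other hro

end I2FAux
namespace I2FAux

open RWAct

variable {T R : Type} {D : R → Type} [DecidableEq T] [DecidableEq R]

section Inv
variable {mode : OverlapMode} {r : R} {s u : RegState T (D r)} {t : T}

lemma ato_startRead_inv (h : AtoTrans mode r s (RWAct.startRead t r) u) :
    gRead mode s t ∧ u = { s with rds := insert t s.rds, pend := insert t s.pend } := by
  cases h
  exact ⟨by assumption, rfl⟩

lemma ato_orderRead_inv (h : AtoTrans mode r s (RWAct.orderRead t r) u) :
    t ∈ s.rds ∧ t ∈ s.pend ∧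
      u = { s with pend := s.pend \ {t}, recv := Function.update s.recv t s.stor } := by
  cases h
  exact ⟨by assumption, by assumption, rfl⟩

lemma ato_finishRead_inv {d : D r} (h : AtoTrans mode r s (RWAct.finishRead t r d) u) :
    t ∈ s.rds ∧ t ∉ s.pend ∧ d = s.recv t ∧ u = { s with rds := s.rds \ {t} } := by
  cases h
  exact ⟨by assumption, by assumption, rfl, rfl⟩

lemma ato_startWrite_inv {d : D r} (h : AtoTrans mode r s (RWAct.startWrite t r d) u) :
    gWrite mode s t ∧ u = { s with
      wrts := insert t s.wrts
      pend := insert t s.pend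
      recv := Function.update s.recv t d } := by
  cases h
  exact ⟨by assumption, rfl⟩

lemma ato_orderWrite_inv (h : AtoTrans mode r s (RWAct.orderWrite t r) u) :
    t ∈ s.wrts ∧ t ∈ s.pend ∧
      u = { s with pend := s.pend \ {t}, stor := s.recv t } := by
  cases h
  exact ⟨by assumption, by assumption, rfl⟩

lemma ato_finishWrite_inv (h : AtoTrans mode r s (RWAct.finishWrite t r) u) :
    t ∈ s.wrts ∧ t ∉ s.pend ∧ u = { s with wrts := s.wrts \ {t} } := by
  cases h
  exact ⟨by assumption, by assumption, rfl⟩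

lemma ato_read_inv {d : D r} (h : AtoTrans mode r s (RWAct.read t r d) u) : False := by
  cases h

end Inv

end I2FAux
namespace I2FAux

open RWAct

attribute [local instance 10] Classical.propDecidable

variable {T R : Type} {D : R → Type} [DecidableEq T] [DecidableEq R]
variable (Θ : ThreadSys T R D) (d0 : ∀ r, D r) (π : RawPath (MState Θ.toIR) (RWAct T R D))

lemma midSpec {k : ℕ} (hQ : Qread Θ d0 π k) {t : T} {r : R} {d : D r}
    (hrd : π.acts k = RWAct.read t r d) :
    MTrans OverlapMode.FR Θ (stFR Θ d0 π k) (RWAct.startRead t r) (mid1 Θ d0 π k) ∧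
    MTrans OverlapMode.FR Θ (mid1 Θ d0 π k) (RWAct.orderRead t r) (mid2 Θ d0 π k) ∧
    MTrans OverlapMode.FR Θ (mid2 Θ d0 π k) (RWAct.finishRead t r d) (stFR Θ d0 π (k+1)) := by
  obtain ⟨t', r', d', heq, h1, h2, h3⟩ := hQ.choose_spec.choose_spec
  rw [hrd] at heq
  rw [RWAct.read.injEq] at heq
  obtain ⟨rfl, rfl, hd⟩ := heq
  have hd' := eq_of_heq hd
  subst hd'
  rw [mid1, mid2, dif_pos hQ, dif_pos hQ]
  exact ⟨h1, h2, h3⟩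

lemma enabledFR_iff (σ : MState Θ) (a : RWAct T R D) :
    EnabledIn (MTrans OverlapMode.FR Θ) a σ ↔
      ((a.isThreadAct → ∃ s', Θ.tr a.thr (σ.th a.thr) a s') ∧
       (∀ r, a.regOf = some r → ∃ u, AtoTrans OverlapMode.FR r (σ.rg r) a u)) := by
  constructor
  · rintro ⟨σ', h1, h2⟩
    exact ⟨fun hta => ⟨σ'.th a.thr, (h1 a.thr).1 ⟨rfl, hta⟩⟩,
           fun r hr => ⟨σ'.rg r, (h2 r).1 hr⟩⟩
  · rintro ⟨h1, h2⟩
    by_cases hta : a.isThreadAct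
    · refine ⟨⟨Function.update σ.th a.thr (h1 hta).choose,
               fun r => if h : a.regOf = some r then (h2 r h).choose else σ.rg r⟩,
              fun t'' => ⟨?_, ?_⟩, fun r'' => ⟨?_, ?_⟩⟩
      · rintro ⟨h3, -⟩
        subst h3
        dsimp only
        rw [Function.update_self]
        exact (h1 hta).choose_spec
      · intro hn
        dsimp only
        rw [Function.update_of_ne (fun e => hn ⟨e.symm, hta⟩)]
      · intro hr
        dsimp only
        rw [dif_pos hr]
        exact (h2 r'' hr).choose_spec
      · intro hr
        dsimp only
        rw [dif_neg hr]
    · refine ⟨⟨σ.th, fun r => if h : a.regOf = some r then (h2 r h).choose else σ.rg r⟩,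
              fun t'' => ⟨?_, ?_⟩, fun r'' => ⟨?_, ?_⟩⟩
      · rintro ⟨-, h⟩
        exact absurd h hta
      · intro _
        rfl
      · intro hr
        dsimp only
        rw [dif_pos hr]
        exact (h2 r'' hr).choose_spec
      · intro hr
        dsimp only
        rw [dif_neg hr]

lemma enabledIR_iff (Ξ : ThreadSys T R D) (σ : MState Ξ) (a : RWAct T R D) :
    EnabledIn (MTransIR Ξ) a σ ↔
      ((a.isThreadAct → ∃ s', Ξ.tr a.thr (σ.th a.thr) a s') ∧
       (∀ r, a.regOf = some r → ∃ u, IRAtoTrans r (σ.rg r) a u)) := by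
  constructor
  · rintro ⟨σ', h1, h2⟩
    exact ⟨fun hta => ⟨σ'.th a.thr, (h1 a.thr).1 ⟨rfl, hta⟩⟩,
           fun r hr => ⟨σ'.rg r, (h2 r).1 hr⟩⟩
  · rintro ⟨h1, h2⟩
    by_cases hta : a.isThreadAct
    · refine ⟨⟨Function.update σ.th a.thr (h1 hta).choose,
               fun r => if h : a.regOf = some r then (h2 r h).choose else σ.rg r⟩,
              fun t'' => ⟨?_, ?_⟩, fun r'' => ⟨?_, ?_⟩⟩
      · rintro ⟨h3, -⟩
        subst h3
        dsimp only
        rw [Function.update_self]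
        exact (h1 hta).choose_spec
      · intro hn
        dsimp only
        rw [Function.update_of_ne (fun e => hn ⟨e.symm, hta⟩)]
      · intro hr
        dsimp only
        rw [dif_pos hr]
        exact (h2 r'' hr).choose_spec
      · intro hr
        dsimp only
        rw [dif_neg hr]
    · refine ⟨⟨σ.th, fun r => if h : a.regOf = some r then (h2 r h).choose else σ.rg r⟩,
              fun t'' => ⟨?_, ?_⟩, fun r'' => ⟨?_, ?_⟩⟩
      · rintro ⟨-, h⟩
        exact absurd h hta
      · intro _
        rfl
      · intro hr
        dsimp only
        rw [dif_pos hr]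
        exact (h2 r'' hr).choose_spec
      · intro hr
        dsimp only
        rw [dif_neg hr]

lemma lemA (hπ : IsPathOf (MTransIR Θ.toIR) (Minit Θ.toIR d0) π) (hΘ : Θ.Good) {k : ℕ}
    (hk : (k:ℕ∞) ≤ π.len) (a : RWAct T R D) (hB : a ∉ Blk)
    (ha : EnabledIn (MTrans OverlapMode.FR Θ) a (stFR Θ d0 π k)) :
    ∃ a' : RWAct T R D, a' ∉ Blk ∧ prEq a a' ∧
      EnabledIn (MTransIR Θ.toIR) a' (π.states k) := by
  rw [enabledFR_iff] at ha
  obtain ⟨hta, hra⟩ := ha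
  cases a with
  | startRead t' r =>
      obtain ⟨e1, e2, e3, e4, e5, e6⟩ := inv_all Θ d0 π hπ k hk r
      obtain ⟨u, hu⟩ := hra r rfl
      have hu2 : AtoTrans OverlapMode.FR r (regs Θ d0 π k r) (RWAct.startRead t' r) u := hu
      obtain ⟨h, -⟩ := ato_startRead_inv hu2
      obtain ⟨m, hm⟩ := hta trivial
      obtain ⟨hfin, -⟩ := hΘ.2.2.1 t' r _ m hm
      obtain ⟨s', hs'⟩ := hfin ((π.states k).rg r).stor
      refine ⟨RWAct.read t' r ((π.states k).rg r).stor, ?_, ?_, ?_⟩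
      · rintro ⟨t0, h0⟩
        cases h0
      · exact ⟨rfl, fun _ => Iff.rfl, fun _ => Iff.rfl⟩
      · rw [enabledIR_iff]
        refine ⟨fun _ => ⟨s', Or.inr ⟨r, _, m, rfl, hm, hs'⟩⟩, ?_⟩
        intro r'' hr
        simp only [RWAct.regOf, Option.some.injEq] at hr
        subst hr
        refine ⟨_, IRAtoTrans.read _ t' ?_⟩
        rw [← e3]
        exact h.2
  | orderRead t' r =>
      obtain ⟨u, hu⟩ := hra r rfl
      have hu2 : AtoTrans OverlapMode.FR r (regs Θ d0 π k r) (RWAct.orderRead t' r) u := hu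
      obtain ⟨h1, -, -⟩ := ato_orderRead_inv hu2
      rw [regs_rds] at h1
      exact absurd h1 (Set.notMem_empty t')
  | finishRead t' r d =>
      obtain ⟨u, hu⟩ := hra r rfl
      have hu2 : AtoTrans OverlapMode.FR r (regs Θ d0 π k r) (RWAct.finishRead t' r d) u := hu
      obtain ⟨h1, -, -, -⟩ := ato_finishRead_inv hu2
      rw [regs_rds] at h1
      exact absurd h1 (Set.notMem_empty t')
  | read t' r d =>
      obtain ⟨s', hs'⟩ := hta trivial
      exact absurd hs' (hΘ.2.1 t' _ _ t' r d)
  | startWrite t' r d =>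
      obtain ⟨e1, e2, e3, e4, e5, e6⟩ := inv_all Θ d0 π hπ k hk r
      obtain ⟨u, hu⟩ := hra r rfl
      have hu2 : AtoTrans OverlapMode.FR r (regs Θ d0 π k r) (RWAct.startWrite t' r d) u := hu
      obtain ⟨h, -⟩ := ato_startWrite_inv hu2
      obtain ⟨s', hs'⟩ := hta trivial
      refine ⟨RWAct.startWrite t' r d, hB, prEq_refl _, ?_⟩
      rw [enabledIR_iff]
      refine ⟨fun _ => ⟨s', Or.inl ⟨fun _ _ => by simp, fun _ _ _ => by simp, hs'⟩⟩, ?_⟩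
      intro r'' hr
      simp only [RWAct.regOf, Option.some.injEq] at hr
      subst hr
      refine ⟨_, IRAtoTrans.startWrite _ t' d ?_⟩
      rw [← e3]
      exact h.2
  | orderWrite t' r =>
      obtain ⟨e1, e2, e3, e4, e5, e6⟩ := inv_all Θ d0 π hπ k hk r
      obtain ⟨u, hu⟩ := hra r rfl
      have hu2 : AtoTrans OverlapMode.FR r (regs Θ d0 π k r) (RWAct.orderWrite t' r) u := hu
      obtain ⟨h1, h2, -⟩ := ato_orderWrite_inv hu2
      refine ⟨RWAct.orderWrite t' r, hB, prEq_refl _, ?_⟩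
      rw [enabledIR_iff]
      refine ⟨fun h => h.elim, ?_⟩
      intro r'' hr
      simp only [RWAct.regOf, Option.some.injEq] at hr
      subst hr
      refine ⟨_, IRAtoTrans.orderWrite _ t' ?_ ?_⟩
      · rw [← e3]; exact h1
      · rw [← e4]; exact h2
  | finishWrite t' r =>
      obtain ⟨e1, e2, e3, e4, e5, e6⟩ := inv_all Θ d0 π hπ k hk r
      obtain ⟨u, hu⟩ := hra r rfl
      have hu2 : AtoTrans OverlapMode.FR r (regs Θ d0 π k r) (RWAct.finishWrite t' r) u := hu
      obtain ⟨h1, h2, -⟩ := ato_finishWrite_inv hu2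
      obtain ⟨s', hs'⟩ := hta trivial
      refine ⟨RWAct.finishWrite t' r, hB, prEq_refl _, ?_⟩
      rw [enabledIR_iff]
      refine ⟨fun _ => ⟨s', Or.inl ⟨fun _ _ => by simp, fun _ _ _ => by simp, hs'⟩⟩, ?_⟩
      intro r'' hr
      simp only [RWAct.regOf, Option.some.injEq] at hr
      subst hr
      refine ⟨_, IRAtoTrans.finishWrite _ t' ?_ ?_⟩
      · rw [← e3]; exact h1
      · rw [← e4]; exact h2
  | crit t' =>
      obtain ⟨s', hs'⟩ := hta trivial
      refine ⟨RWAct.crit t', hB, prEq_refl _, ?_⟩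
      rw [enabledIR_iff]
      refine ⟨fun _ => ⟨s', Or.inl ⟨fun _ _ => by simp, fun _ _ _ => by simp, hs'⟩⟩, ?_⟩
      intro r'' hr
      cases hr
  | noncrit t' =>
      exact absurd ⟨t', rfl⟩ hB
  | tloc t' n =>
      obtain ⟨s', hs'⟩ := hta trivial
      refine ⟨RWAct.tloc t' n, hB, prEq_refl _, ?_⟩
      rw [enabledIR_iff]
      refine ⟨fun _ => ⟨s', Or.inl ⟨fun _ _ => by simp, fun _ _ _ => by simp, hs'⟩⟩, ?_⟩
      intro r'' hr
      cases hr

end I2FAux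
namespace I2FAux

open RWAct

attribute [local instance 10] Classical.propDecidable

variable {T R : Type} {D : R → Type} [DecidableEq T] [DecidableEq R]

lemma reg_transfer {r : R} {F σr G : RegState T (D r)} {t : T}
    (hFrds : F.rds = ∅)
    (hσrds : σr.rds = insert t F.rds) (hσw : σr.wrts = F.wrts)
    (hσp : σr.pend = insert t F.pend ∨ σr.pend = (insert t F.pend) \ {t})
    (hGrds : G.rds = F.rds) (hGw : G.wrts = F.wrts) (hGp : G.pend = F.pend)
    {a : RWAct T R D} (hthr : a.thr ≠ t) (hreg : a.regOf = some r)
    (hu : ∃ u, AtoTrans OverlapMode.FR r σr a u) :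
    ∃ u, AtoTrans OverlapMode.FR r G a u := by
  obtain ⟨u, hu⟩ := hu
  cases a with
  | startRead t1 r1 =>
      have hr1 : r1 = r := Option.some.inj hreg
      subst hr1
      have ht1 : t1 ≠ t := hthr
      obtain ⟨hg, -⟩ := ato_startRead_inv hu
      refine ⟨_, AtoTrans.startRead G t1 ⟨?_, ?_⟩⟩
      · rw [hGrds]
        intro hmem
        exact hg.1 (hσrds ▸ Set.mem_insert_of_mem t hmem)
      · rw [hGw]
        intro hmem
        exact hg.2 (hσw ▸ hmem)
  | orderRead t1 r1 =>
      have hr1 : r1 = r := Option.some.inj hreg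
      subst hr1
      obtain ⟨h1, -, -⟩ := ato_orderRead_inv hu
      rw [hσrds, hFrds] at h1
      rcases Set.mem_insert_iff.mp h1 with h | h
      · exact absurd h hthr
      · exact absurd h (Set.notMem_empty t1)
  | finishRead t1 r1 d1 =>
      have hr1 : r1 = r := Option.some.inj hreg
      subst hr1
      obtain ⟨h1, -, -, -⟩ := ato_finishRead_inv hu
      rw [hσrds, hFrds] at h1
      rcases Set.mem_insert_iff.mp h1 with h | h
      · exact absurd h hthr
      · exact absurd h (Set.notMem_empty t1)
  | read t1 r1 d1 =>
      have hr1 : r1 = r := Option.some.inj hreg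
      subst hr1
      exact absurd hu ato_read_inv
  | startWrite t1 r1 d1 =>
      have hr1 : r1 = r := Option.some.inj hreg
      subst hr1
      obtain ⟨hg, -⟩ := ato_startWrite_inv hu
      refine ⟨_, AtoTrans.startWrite G t1 d1 ⟨?_, ?_⟩⟩
      · rw [hGrds]
        intro hmem
        exact hg.1 (hσrds ▸ Set.mem_insert_of_mem t hmem)
      · rw [hGw]
        intro hmem
        exact hg.2 (hσw ▸ hmem)
  | orderWrite t1 r1 =>
      have hr1 : r1 = r := Option.some.inj hreg
      subst hr1
      obtain ⟨h1, h2, -⟩ := ato_orderWrite_inv hu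
      refine ⟨_, AtoTrans.orderWrite G t1 ?_ ?_⟩
      · rw [hGw, ← hσw]
        exact h1
      · rw [hGp]
        rcases hσp with hp | hp
        · rw [hp] at h2
          rcases Set.mem_insert_iff.mp h2 with h | h
          · exact absurd h hthr
          · exact h
        · rw [hp] at h2
          rcases Set.mem_insert_iff.mp h2.1 with h | h
          · exact absurd h hthr
          · exact h
  | finishWrite t1 r1 =>
      have hr1 : r1 = r := Option.some.inj hreg
      subst hr1
      obtain ⟨h1, h2, -⟩ := ato_finishWrite_inv hu
      refine ⟨_, AtoTrans.finishWrite G t1 ?_ ?_⟩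
      · rw [hGw, ← hσw]
        exact h1
      · rw [hGp]
        intro hmem
        rcases hσp with hp | hp
        · rw [hp] at h2
          exact h2 (Set.mem_insert_of_mem t hmem)
        · rw [hp] at h2
          exact h2 ⟨Set.mem_insert_of_mem t hmem, fun e => hthr (Set.mem_singleton_iff.mp e)⟩
  | crit t1 => cases hreg
  | noncrit t1 => cases hreg
  | tloc t1 n => cases hreg

variable (Θ : ThreadSys T R D) (d0 : ∀ r, D r) (π : RawPath (MState Θ.toIR) (RWAct T R D))

lemma lemB (hπ : IsPathOf (MTransIR Θ.toIR) (Minit Θ.toIR d0) π) (hΘ : Θ.Good) {k : ℕ}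
    (hk : (k:ℕ∞) < π.len) {t : T} {r : R} {d : D r}
    (hrd : π.acts k = RWAct.read t r d) {σ : MState Θ}
    (hσ : σ = mid1 Θ d0 π k ∨ σ = mid2 Θ d0 π k) {a : RWAct T R D} (hthr : a.thr ≠ t)
    (ha : EnabledIn (MTrans OverlapMode.FR Θ) a σ) :
    EnabledIn (MTrans OverlapMode.FR Θ) a (stFR Θ d0 π (k+1)) := by
  have hQ := qread_of Θ d0 π hπ hΘ hk hrd
  obtain ⟨tr1, tr2, tr3⟩ := midSpec Θ d0 π hQ hrd
  obtain ⟨e1, e2, e3, e4, e5, e6⟩ := inv_all Θ d0 π hπ k (le_of_lt hk) r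
  have step := hπ.2 k hk
  have hm1r : AtoTrans OverlapMode.FR r (regs Θ d0 π k r) (RWAct.startRead t r)
      ((mid1 Θ d0 π k).rg r) := (tr1.2 r).1 rfl
  obtain ⟨hg1, hm1req⟩ := ato_startRead_inv hm1r
  have hm2r : AtoTrans OverlapMode.FR r ((mid1 Θ d0 π k).rg r) (RWAct.orderRead t r)
      ((mid2 Θ d0 π k).rg r) := (tr2.2 r).1 rfl
  obtain ⟨-, -, hm2req⟩ := ato_orderRead_inv hm2r
  have hth1 : ∀ t'', t'' ≠ t → (mid1 Θ d0 π k).th t'' = (π.states k).th t'' :=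
    fun t'' h => (tr1.1 t'').2 (fun hc => h hc.1.symm)
  have hth2 : ∀ t'', (mid2 Θ d0 π k).th t'' = (mid1 Θ d0 π k).th t'' :=
    fun t'' => (tr2.1 t'').2 (fun hc => False.elim hc.2)
  have hrg1o : ∀ r', r' ≠ r → (mid1 Θ d0 π k).rg r' = regs Θ d0 π k r' := by
    intro r' h
    refine (tr1.2 r').2 ?_
    intro hc
    have hc' : some r = some r' := hc
    exact h (Option.some.inj hc').symm
  have hrg2o : ∀ r', r' ≠ r → (mid2 Θ d0 π k).rg r' = (mid1 Θ d0 π k).rg r' := by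
    intro r' h
    refine (tr2.2 r').2 ?_
    intro hc
    have hc' : some r = some r' := hc
    exact h (Option.some.inj hc').symm
  have hstep_th : ∀ t'', t'' ≠ t → (π.states (k+1)).th t'' = (π.states k).th t'' := by
    intro t'' h
    refine (step.1 t'').2 ?_
    intro hc
    rw [hrd] at hc
    exact h hc.1.symm
  have hregs1 : regs Θ d0 π (k+1) r = { regs Θ d0 π k r with
      recv := Function.update (regs Θ d0 π k r).recv t (regs Θ d0 π k r).stor } := by
    show regStep (π.acts k) (regs Θ d0 π k) r = _
    rw [hrd]
    simp only [regStep, Function.update_self]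
  have hregso : ∀ r', r' ≠ r → regs Θ d0 π (k+1) r' = regs Θ d0 π k r' := by
    intro r' h
    show regStep (π.acts k) (regs Θ d0 π k) r' = _
    refine regStep_other ?_
    rw [hrd]
    simp only [RWAct.regOf, Ne, Option.some.injEq]
    exact fun e => h e.symm
  rw [enabledFR_iff] at ha ⊢
  obtain ⟨hta, hra⟩ := ha
  constructor
  · intro h
    obtain ⟨s', hs'⟩ := hta h
    refine ⟨s', ?_⟩
    have hσth : σ.th a.thr = (π.states k).th a.thr := by
      rcases hσ with rfl | rfl
      · exact hth1 _ hthr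
      · rw [hth2]
        exact hth1 _ hthr
    rw [hσth] at hs'
    show Θ.tr a.thr ((π.states (k+1)).th a.thr) a s'
    rw [hstep_th _ hthr]
    exact hs'
  · intro r' hr'
    by_cases hrr : r' = r
    · subst hrr
      have hσrds : (σ.rg r').rds = insert t (regs Θ d0 π k r').rds := by
        rcases hσ with rfl | rfl
        · rw [hm1req]
        · rw [hm2req, hm1req]
      have hσw : (σ.rg r').wrts = (regs Θ d0 π k r').wrts := by
        rcases hσ with rfl | rfl
        · rw [hm1req]
        · rw [hm2req, hm1req]
      have hσp : (σ.rg r').pend = insert t (regs Θ d0 π k r').pend ∨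
          (σ.rg r').pend = (insert t (regs Θ d0 π k r').pend) \ {t} := by
        rcases hσ with rfl | rfl
        · left
          rw [hm1req]
        · right
          rw [hm2req, hm1req]
      show ∃ u, AtoTrans OverlapMode.FR r' (regs Θ d0 π (k+1) r') a u
      refine reg_transfer (regs_rds Θ d0 π k r') hσrds hσw hσp ?_ ?_ ?_ hthr hr' (hra r' hr')
      · rw [hregs1]
      · rw [hregs1]
      · rw [hregs1]
    · obtain ⟨u, hu⟩ := hra r' hr'
      have hσrg : σ.rg r' = regs Θ d0 π k r' := by
        rcases hσ with rfl | rfl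
        · exact hrg1o r' hrr
        · rw [hrg2o r' hrr]
          exact hrg1o r' hrr
      rw [hσrg] at hu
      refine ⟨u, ?_⟩
      show AtoTrans OverlapMode.FR r' (regs Θ d0 π (k+1) r') a u
      rw [hregso r' hrr]
      exact hu

end I2FAux
namespace I2FAux

open RWAct

attribute [local instance 10] Classical.propDecidable

variable {T R : Type} {D : R → Type} [DecidableEq T] [DecidableEq R]
variable (Θ : ThreadSys T R D) (d0 : ∀ r, D r) (π : RawPath (MState Θ.toIR) (RWAct T R D))

lemma blockAct_nonread {k : ℕ} (hnr : ¬ (π.acts k).isReadAct) (i : ℕ) :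
    blockAct Θ π k i = π.acts k := by
  unfold blockAct
  cases hA : π.acts k <;>
    first
      | rfl
      | (rw [hA] at hnr; exact absurd trivial hnr)

lemma blockAct_read {k : ℕ} {t : T} {r : R} {d : D r} (hrd : π.acts k = RWAct.read t r d) :
    blockAct Θ π k 0 = RWAct.startRead t r ∧ blockAct Θ π k 1 = RWAct.orderRead t r ∧
    ∀ i, blockAct Θ π k (i+2) = RWAct.finishRead t r d := by
  refine ⟨?_, ?_, fun i => ?_⟩ <;> (unfold blockAct; rw [hrd]) <;> rfl

lemma blockAct_not_vis {k : ℕ} {t : T} {r : R} {d : D r}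
    (hrd : π.acts k = RWAct.read t r d) {i : ℕ} :
    ¬ RWAct.IsVis (blockAct Θ π k i) := by
  match i with
  | 0 => rw [(blockAct_read Θ π hrd).1]; exact fun h => h
  | 1 => rw [(blockAct_read Θ π hrd).2.1]; exact fun h => h
  | (i+2) => rw [(blockAct_read Θ π hrd).2.2 i]; exact fun h => h

lemma vis_nonread {a : RWAct T R D} (h : a.IsVis) : ¬ a.isReadAct := by
  cases a <;> first | exact h.elim | exact fun x => x

lemma prEq_act0 {k : ℕ} : prEq (π.acts k) (blockAct Θ π k 0) := by
  by_cases hnr : (π.acts k).isReadAct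
  · obtain ⟨t, r, d, hrd⟩ := isReadAct_iff hnr
    rw [(blockAct_read Θ π hrd).1, hrd]
    exact prEq_read_startRead t r d
  · rw [blockAct_nonread Θ π hnr 0]
    exact prEq_refl _

lemma blockState0 (k : ℕ) : blockState Θ d0 π k 0 = stFR Θ d0 π k := if_pos rfl

lemma blockState1 (k : ℕ) : blockState Θ d0 π k 1 = mid1 Θ d0 π k := by
  unfold blockState
  rw [if_neg one_ne_zero, if_pos rfl]

lemma blockState2 (k : ℕ) : blockState Θ d0 π k 2 = mid2 Θ d0 π k := by
  unfold blockState
  rw [if_neg (by omega), if_neg (by omega)]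

lemma pathFR_acts_eq {n k i : ℕ} (h : gIdx Θ π n = (k, i)) :
    (pathFR Θ d0 π).acts n = blockAct Θ π k i := by
  show blockAct Θ π (gIdx Θ π n).1 (gIdx Θ π n).2 = _
  rw [h]

lemma pathFR_states_eq {n k i : ℕ} (h : gIdx Θ π n = (k, i)) :
    (pathFR Θ d0 π).states n = blockState Θ d0 π k i := by
  show blockState Θ d0 π (gIdx Θ π n).1 (gIdx Θ π n).2 = _
  rw [h]

lemma pathFR_isPath (hπ : IsPathOf (MTransIR Θ.toIR) (Minit Θ.toIR d0) π) (hΘ : Θ.Good) :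
    IsPathOf (MTrans OverlapMode.FR Θ) (Minit Θ d0) (pathFR Θ d0 π) := by
  constructor
  · show blockState Θ d0 π (gIdx Θ π 0).1 (gIdx Θ π 0).2 = Minit Θ d0
    rw [show gIdx Θ π 0 = (0, 0) from rfl, blockState0]
    show stFR Θ d0 π 0 = Minit Θ d0
    unfold stFR
    rw [hπ.1]
    rfl
  · intro n hn
    obtain ⟨hstruct, hblk⟩ := gIdx_struct Θ π n
    have hklt : ((gIdx Θ π n).1 : ℕ∞) < π.len := blk_lt_len Θ π hn
    by_cases hnr : (π.acts (gIdx Θ π n).1).isReadAct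
    · obtain ⟨t, r, d, hrd⟩ := isReadAct_iff hnr
      have hbl3 : blockLen Θ π (gIdx Θ π n).1 = 3 := blockLen_eq3 Θ π hklt hrd
      have hQ := qread_of Θ d0 π hπ hΘ hklt hrd
      obtain ⟨tr1, tr2, tr3⟩ := midSpec Θ d0 π hQ hrd
      have hgn : gIdx Θ π n = ((gIdx Θ π n).1, (gIdx Θ π n).2) := rfl
      rcases hi : (gIdx Θ π n).2 with _ | _ | _ | ii
      · rw [pathFR_states_eq Θ d0 π (by rw [hgn, hi]),
            pathFR_acts_eq Θ d0 π (by rw [hgn, hi]),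
            pathFR_states_eq Θ d0 π (gIdx_eq Θ π
              (show 1 < blockLen Θ π (gIdx Θ π n).1 by omega)
              (show n + 1 = fIdx Θ π (gIdx Θ π n).1 + 1 by omega)),
            blockState0, blockState1, (blockAct_read Θ π hrd).1]
        exact tr1
      · rw [pathFR_states_eq Θ d0 π (by rw [hgn, hi]),
            pathFR_acts_eq Θ d0 π (by rw [hgn, hi]),
            pathFR_states_eq Θ d0 π (gIdx_eq Θ π
              (show 2 < blockLen Θ π (gIdx Θ π n).1 by omega)
              (show n + 1 = fIdx Θ π (gIdx Θ π n).1 + 2 by omega)),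
            blockState1, blockState2, (blockAct_read Θ π hrd).2.1]
        exact tr2
      · rw [pathFR_states_eq Θ d0 π (by rw [hgn, hi]),
            pathFR_acts_eq Θ d0 π (by rw [hgn, hi]),
            pathFR_states_eq Θ d0 π
              (gIdx_eq Θ π (blockLen_pos Θ π ((gIdx Θ π n).1 + 1))
                (by rw [fIdx_succ, hbl3]; omega)),
            blockState2, blockState0, (blockAct_read Θ π hrd).2.2 0]
        exact tr3
      · omega
    · have hbl1 : blockLen Θ π (gIdx Θ π n).1 = 1 := blockLen_eq1 Θ π (fun hc => hnr hc.2)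
      have hi : (gIdx Θ π n).2 = 0 := by omega
      have hgn : gIdx Θ π n = ((gIdx Θ π n).1, 0) := Prod.ext rfl hi
      rw [pathFR_states_eq Θ d0 π hgn,
          pathFR_acts_eq Θ d0 π hgn,
          pathFR_states_eq Θ d0 π
            (gIdx_eq Θ π (blockLen_pos Θ π ((gIdx Θ π n).1 + 1))
              (by rw [fIdx_succ, hbl1]; omega)),
          blockState0, blockState0, blockAct_nonread Θ π hnr 0]
      exact sim_nonread Θ d0 π hπ hklt hnr

end I2FAux
namespace I2FAux

open RWAct

attribute [local instance 10] Classical.propDecidable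

variable {T R : Type} {D : R → Type} [DecidableEq T] [DecidableEq R]
variable (Θ : ThreadSys T R D) (d0 : ∀ r, D r) (π : RawPath (MState Θ.toIR) (RWAct T R D))

lemma pathFR_i2f : IsI2F π (pathFR Θ d0 π) := by
  refine ⟨fIdx Θ π, rfl, ?_, ?_, ?_⟩
  · intro k hk
    by_cases hnr : (π.acts k).isReadAct
    · obtain ⟨t, r, d, hrd⟩ := isReadAct_iff hnr
      have hbl3 := blockLen_eq3 Θ π hk hrd
      refine Or.inr ⟨t, r, d, hrd, ?_, ?_, ?_, ?_⟩
      · rw [pathFR_acts_eq Θ d0 π (gIdx_eq Θ π (k := k) (i := 0) (by omega) (by omega))]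
        exact (blockAct_read Θ π hrd).1
      · rw [pathFR_acts_eq Θ d0 π (gIdx_eq Θ π (k := k) (i := 1) (by omega) (by omega))]
        exact (blockAct_read Θ π hrd).2.1
      · rw [pathFR_acts_eq Θ d0 π (gIdx_eq Θ π (k := k) (i := 2) (by omega) (by omega))]
        exact (blockAct_read Θ π hrd).2.2 0
      · rw [fIdx_succ, hbl3]
    · have hbl1 : blockLen Θ π k = 1 := blockLen_eq1 Θ π (fun hc => hnr hc.2)
      refine Or.inl ⟨hnr, ?_, ?_⟩
      · rw [pathFR_acts_eq Θ d0 π (gIdx_eq Θ π (k := k) (i := 0) (by omega) (by omega))]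
        exact blockAct_nonread Θ π hnr 0
      · rw [fIdx_succ, hbl1]
  · intro htop
    exact plen_top Θ π htop
  · intro n hn
    show plen Θ π = _
    have hne : π.len ≠ ⊤ := by rw [hn]; exact (by simp)
    rw [plen_coe Θ π hne, hn, ENat.toNat_coe]

lemma pathFR_just {conc : RWAct T R D → RWAct T R D → Prop}
    (hconc : conc = concT ∨ conc = concS ∨ conc = concI ∨ conc = concA)
    (hπ : IsPathOf (MTransIR Θ.toIR) (Minit Θ.toIR d0) π) (hΘ : Θ.Good)
    (hj : JustPath (MTransIR Θ.toIR) conc Blk π) :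
    JustPath (MTrans OverlapMode.FR Θ) conc Blk (pathFR Θ d0 π) := by
  intro n a hn hB ha
  obtain ⟨hstruct, hblk⟩ := gIdx_struct Θ π n
  by_cases hi0 : (gIdx Θ π n).2 = 0
  · have hkle : ((gIdx Θ π n).1 : ℕ∞) ≤ π.len := blk_le_len Θ π hn
    rw [pathFR_states_eq Θ d0 π (show gIdx Θ π n = ((gIdx Θ π n).1, 0) from Prod.ext rfl hi0), blockState0] at ha
    obtain ⟨a', hB', hpr, hen⟩ := lemA Θ d0 π hπ hΘ hkle a hB ha
    obtain ⟨j, hkj, hjlt, hnc⟩ := hj (gIdx Θ π n).1 a' hkle hB' hen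
    refine ⟨fIdx Θ π j, ?_, ?_, ?_⟩
    · have := (fIdx_mono Θ π).monotone hkj
      omega
    · have h := lt_plen Θ π hjlt (blockLen_pos Θ π j); simp at h; exact h
    · intro hc
      apply hnc
      rw [pathFR_acts_eq Θ d0 π (gIdx_eq Θ π (blockLen_pos Θ π j) (by omega))] at hc
      exact (conc_congr hconc hpr (prEq_symm (prEq_act0 Θ π))).mp hc
  · have hbl3 : blockLen Θ π (gIdx Θ π n).1 = 3 := by
      by_cases hc : ((gIdx Θ π n).1 : ℕ∞) < π.len ∧ (π.acts (gIdx Θ π n).1).isReadAct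
      · unfold blockLen
        rw [if_pos hc]
      · have := blockLen_eq1 Θ π hc
        omega
    obtain ⟨hklt, t, r, d, hrd⟩ := blockLen_eq3' Θ π hbl3
    have hσ : (pathFR Θ d0 π).states n = mid1 Θ d0 π (gIdx Θ π n).1 ∨
        (pathFR Θ d0 π).states n = mid2 Θ d0 π (gIdx Θ π n).1 := by
      rcases hi : (gIdx Θ π n).2 with _ | _ | _ | ii
      · exact absurd hi hi0
      · left
        rw [pathFR_states_eq Θ d0 π (show gIdx Θ π n = ((gIdx Θ π n).1, 1) from Prod.ext rfl hi), blockState1]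
      · right
        rw [pathFR_states_eq Θ d0 π (show gIdx Θ π n = ((gIdx Θ π n).1, 2) from Prod.ext rfl hi), blockState2]
      · omega
    by_cases hth : a.thr = t
    · refine ⟨fIdx Θ π (gIdx Θ π n).1 + 2, by omega, ?_, ?_⟩
      · have h := lt_plen Θ π hklt (show 2 < blockLen Θ π (gIdx Θ π n).1 by omega); simp at h; exact h
      · intro hc
        rw [pathFR_acts_eq Θ d0 π
              (gIdx_eq Θ π (show 2 < blockLen Θ π (gIdx Θ π n).1 by omega) rfl),
            (blockAct_read Θ π hrd).2.2 0] at hc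
        exact (conc_thr hconc hc) (by rw [hth]; rfl)
    · have hen2 := lemB Θ d0 π hπ hΘ hklt hrd hσ hth ha
      have hk1le : (((gIdx Θ π n).1 + 1 : ℕ) : ℕ∞) ≤ π.len := by
        push_cast
        exact Order.add_one_le_of_lt hklt
      obtain ⟨a', hB', hpr, hen⟩ := lemA Θ d0 π hπ hΘ hk1le a hB hen2
      obtain ⟨j, hkj, hjlt, hnc⟩ := hj _ a' hk1le hB' hen
      refine ⟨fIdx Θ π j, ?_, ?_, ?_⟩
      · have h1 : fIdx Θ π ((gIdx Θ π n).1 + 1) ≤ fIdx Θ π j := (fIdx_mono Θ π).monotone hkj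
        have h2 : fIdx Θ π ((gIdx Θ π n).1 + 1) = fIdx Θ π (gIdx Θ π n).1 + 3 := by
          rw [fIdx_succ, hbl3]
        omega
      · have h := lt_plen Θ π hjlt (blockLen_pos Θ π j); simp at h; exact h
      · intro hc
        apply hnc
        rw [pathFR_acts_eq Θ d0 π (gIdx_eq Θ π (blockLen_pos Θ π j) (by omega))] at hc
        exact (conc_congr hconc hpr (prEq_symm (prEq_act0 Θ π))).mp hc

lemma ell_forward {w : ℕ → Option (RWAct T R D)} (he : IsEllMinus RWAct.IsVis π w) :
    IsEllMinus RWAct.IsVis (pathFR Θ d0 π) w := by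
  obtain ⟨m, φ, hmono, hprop, hnone, hsurj⟩ := he
  refine ⟨m, fun i => fIdx Θ π (φ i), ?_, ?_, hnone, ?_⟩
  · intro i j hi hj hij
    exact (fIdx_mono Θ π) (hmono i j hi hj hij)
  · intro i hi
    obtain ⟨h1, h2, h3⟩ := hprop i hi
    have hact : (pathFR Θ d0 π).acts (fIdx Θ π (φ i)) = π.acts (φ i) := by
      rw [pathFR_acts_eq Θ d0 π (gIdx_eq Θ π (blockLen_pos Θ π (φ i)) (by omega))]
      exact blockAct_nonread Θ π (vis_nonread h2) 0
    refine ⟨?_, ?_, ?_⟩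
    · show (↑(fIdx Θ π (φ i)) : ℕ∞) < (pathFR Θ d0 π).len
      have h := lt_plen Θ π h1 (blockLen_pos Θ π (φ i)); simp at h; exact h
    · rw [hact]; exact h2
    · rw [hact]; exact h3
  · intro j hj hvis
    obtain ⟨hstruct, hblk⟩ := gIdx_struct Θ π j
    have hklt := blk_lt_len Θ π hj
    have hnr : ¬ (π.acts (gIdx Θ π j).1).isReadAct := by
      intro hre
      obtain ⟨t, r, d, hrd⟩ := isReadAct_iff hre
      exact blockAct_not_vis Θ π hrd hvis
    have hact : (pathFR Θ d0 π).acts j = π.acts (gIdx Θ π j).1 :=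
      blockAct_nonread Θ π hnr _
    rw [hact] at hvis
    obtain ⟨i, hi, hfi⟩ := hsurj (gIdx Θ π j).1 hklt hvis
    refine ⟨i, hi, ?_⟩
    have hbl1 : blockLen Θ π (gIdx Θ π j).1 = 1 := blockLen_eq1 Θ π (fun hcy => hnr hcy.2)
    show fIdx Θ π (φ i) = j
    rw [hfi]
    omega

lemma ell_backward {w : ℕ → Option (RWAct T R D)}
    (he : IsEllMinus RWAct.IsVis (pathFR Θ d0 π) w) : IsEllMinus RWAct.IsVis π w := by
  obtain ⟨m, φ, hmono, hprop, hnone, hsurj⟩ := he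
  have key : ∀ i : ℕ, (i:ℕ∞) < m → ((gIdx Θ π (φ i)).1 : ℕ∞) < π.len ∧
      (gIdx Θ π (φ i)).2 = 0 ∧
      (pathFR Θ d0 π).acts (φ i) = π.acts (gIdx Θ π (φ i)).1 := by
    intro i hi
    obtain ⟨h1, h2, -⟩ := hprop i hi
    have hklt := blk_lt_len Θ π h1
    have hnr : ¬ (π.acts (gIdx Θ π (φ i)).1).isReadAct := by
      intro hre
      obtain ⟨t, r, d, hrd⟩ := isReadAct_iff hre
      exact blockAct_not_vis Θ π hrd h2
    have hbl1 := blockLen_eq1 Θ π (fun hcy => hnr hcy.2)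
    have hblk := (gIdx_struct Θ π (φ i)).2
    exact ⟨hklt, by omega, blockAct_nonread Θ π hnr _⟩
  refine ⟨m, fun i => (gIdx Θ π (φ i)).1, ?_, ?_, hnone, ?_⟩
  · intro i j hi hj hij
    have ki := key i hi
    have kj := key j hj
    have hlt := hmono i j hi hj hij
    by_contra hc
    push_neg at hc
    have h1 := (gIdx_struct Θ π (φ i)).1
    have h2 := (gIdx_struct Θ π (φ j)).1
    have h3 := (fIdx_mono Θ π).monotone hc
    omega
  · intro i hi
    obtain ⟨h1, h2, h3⟩ := hprop i hi
    obtain ⟨hklt, hoff, hact⟩ := key i hi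
    exact ⟨hklt, by rw [← hact]; exact h2, by rw [← hact]; exact h3⟩
  · intro j hj hvis
    have hact : (pathFR Θ d0 π).acts (fIdx Θ π j) = π.acts j := by
      rw [pathFR_acts_eq Θ d0 π (gIdx_eq Θ π (blockLen_pos Θ π j) (by omega))]
      exact blockAct_nonread Θ π (vis_nonread hvis) 0
    obtain ⟨i, hi, hfi⟩ := hsurj (fIdx Θ π j)
      (by have h := lt_plen Θ π hj (blockLen_pos Θ π j); simp at h; exact h) (by rw [hact]; exact hvis)
    refine ⟨i, hi, ?_⟩
    show (gIdx Θ π (φ i)).1 = j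
    rw [hfi, gIdx_eq Θ π (blockLen_pos Θ π j) (by omega)]

end I2FAux
/-- Every `B`-`⌣_C`-just path of the instant-read model `M_IR` is transformed by `i2f`
(replacing each read with start-read · order-read · finish-read) into a `B`-`⌣_C`-just
path of the full-read model `M_FR` with the same weak traces; consequently
`WCT_C(M_IR) ⊆ WCT_C(M_FR)`. -/
theorem instant_read_just_to_full_read_just
    {T R : Type} {D : R → Type} [DecidableEq T]
    (Θ : ThreadSys T R D) (hΘ : Θ.Good) (d0 : ∀ r, D r)
    (conc : RWAct T R D → RWAct T R D → Prop)
    (hconc : conc = concT ∨ conc = concS ∨ conc = concI ∨ conc = concA) :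
    (∀ π : RawPath (MState Θ.toIR) (RWAct T R D),
        IsPathOf (MTransIR Θ.toIR) (Minit Θ.toIR d0) π →
        JustPath (MTransIR Θ.toIR) conc Blk π →
        ∃ π' : RawPath (MState Θ) (RWAct T R D),
          IsPathOf (MTrans OverlapMode.FR Θ) (Minit Θ d0) π' ∧
          IsI2F π π' ∧
          JustPath (MTrans OverlapMode.FR Θ) conc Blk π' ∧
          (∀ w : ℕ → Option (RWAct T R D),
            IsEllMinus RWAct.IsVis π w ↔ IsEllMinus RWAct.IsVis π' w)) ∧
      WCT (MTransIR Θ.toIR) (Minit Θ.toIR d0)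
          (JustPath (MTransIR Θ.toIR) conc Blk) RWAct.IsVis ⊆
        WCT (MTrans OverlapMode.FR Θ) (Minit Θ d0)
          (JustPath (MTrans OverlapMode.FR Θ) conc Blk) RWAct.IsVis := by
  letI : DecidableEq R := Classical.decEq R
  have main : ∀ π : RawPath (MState Θ.toIR) (RWAct T R D),
      IsPathOf (MTransIR Θ.toIR) (Minit Θ.toIR d0) π →
      JustPath (MTransIR Θ.toIR) conc Blk π →
      ∃ π' : RawPath (MState Θ) (RWAct T R D),
        IsPathOf (MTrans OverlapMode.FR Θ) (Minit Θ d0) π' ∧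
        IsI2F π π' ∧
        JustPath (MTrans OverlapMode.FR Θ) conc Blk π' ∧
        (∀ w : ℕ → Option (RWAct T R D),
          IsEllMinus RWAct.IsVis π w ↔ IsEllMinus RWAct.IsVis π' w) := by
    intro π hπ hj
    exact ⟨I2FAux.pathFR Θ d0 π, I2FAux.pathFR_isPath Θ d0 π hπ hΘ,
      I2FAux.pathFR_i2f Θ d0 π, I2FAux.pathFR_just Θ d0 π hconc hπ hΘ hj,
      fun w => ⟨fun he => I2FAux.ell_forward Θ d0 π he,
        fun he => I2FAux.ell_backward Θ d0 π he⟩⟩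
  refine ⟨main, ?_⟩
  rintro w ⟨π, hπ, hj, hell⟩
  obtain ⟨π', h1, h2, h3, h4⟩ := main π hπ hj
  exact ⟨π', h1, h3, (h4 w).mp hell⟩
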